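/- For every even n > 6, there exists an n×n non-consecutive by king's move Latin square, and for every even n > 12, there exists an n×n non-consecutive by king's move Latin square that is also anti-king. In particular, if k and m are coprime to n with k, m, mk all not congruent to ±1 mod n, then the square with entry (i,j) = 1 + ((jk + imk) mod n) is such a square. -/
import Mathlib


/-- An `n × n` Latin square with entries in `{1, …, n}`. -/
def latin (n : ℕ) (M : Fin n → Fin n → ℕ) : Prop :=
  (∀ i j, M i j ∈ Finset.Icc 1 n) ∧
  (∀ i, Function.Injective fun j => M i j) ∧
  (∀ j, Function.Injective fun i => M i j)

/-- Two cells are orthogonally adjacent. -/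
def orthAdj (n : ℕ) (p q : Fin n × Fin n) : Prop :=
  (p.1 = q.1 ∧ (p.2.val + 1 = q.2.val ∨ q.2.val + 1 = p.2.val)) ∨
  (p.2 = q.2 ∧ (p.1.val + 1 = q.1.val ∨ q.1.val + 1 = p.1.val))

/-- Two cells are a king's move apart (orthogonally or diagonally adjacent). -/
def kingAdj (n : ℕ) (p q : Fin n × Fin n) : Prop :=
  p ≠ q ∧ ((p.1.val : ℤ) - q.1.val).natAbs ≤ 1 ∧ ((p.2.val : ℤ) - q.2.val).natAbs ≤ 1

/-- Two cells are a knight's move apart. -/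
def knightAdj (n : ℕ) (p q : Fin n × Fin n) : Prop :=
  (((p.1.val : ℤ) - q.1.val).natAbs = 1 ∧ ((p.2.val : ℤ) - q.2.val).natAbs = 2) ∨
  (((p.1.val : ℤ) - q.1.val).natAbs = 2 ∧ ((p.2.val : ℤ) - q.2.val).natAbs = 1)

/-- Two cells are a bishop's move apart: on a common diagonal, at nonzero distance. -/
def bishopMove (n : ℕ) (p q : Fin n × Fin n) : Prop :=
  ((p.1.val : ℤ) - q.1.val).natAbs = ((p.2.val : ℤ) - q.2.val).natAbs ∧ p.1 ≠ q.1

/-- Two cells are orthogonally adjacent on the torus (wrapping around). -/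
def torAdj (n : ℕ) (p q : Fin n × Fin n) : Prop :=
  p ≠ q ∧
    ((p.1 = q.1 ∧ ((p.2.val + 1) % n = q.2.val ∨ (q.2.val + 1) % n = p.2.val)) ∨
     (p.2 = q.2 ∧ ((p.1.val + 1) % n = q.1.val ∨ (q.1.val + 1) % n = p.1.val)))

/-- Two values differ by exactly 1. -/
def diffOne (a b : ℕ) : Prop := ((a : ℤ) - (b : ℤ)).natAbs = 1

/-- For even `n > 6` there is a non-consecutive by king's move Latin square, and for
even `n > 12` one that is also anti-king. In particular, if `k`, `m` are coprime to `n`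
with `k`, `m`, `mk` all not congruent to `±1 (mod n)`, then the square with entry
`(i,j) = 1 + ((jk + imk) mod n)` is such a square. -/
lemma evenCast_ne {n : ℕ} (hn2 : 2 ∣ n) {x : ℤ} (hx : Even x) :
    (x : ZMod n) ≠ 1 ∧ (x : ZMod n) ≠ -1 := by
  have h0 : ((x : ZMod 2)) = 0 := by
    rw [ZMod.intCast_zmod_eq_zero_iff_dvd]
    exact hx.two_dvd
  constructor <;> intro h
  · have h2 := congrArg (ZMod.castHom hn2 (ZMod 2)) h
    rw [map_intCast, map_one, h0] at h2
    exact absurd h2 (by decide)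
  · have h2 := congrArg (ZMod.castHom hn2 (ZMod 2)) h
    rw [map_intCast, map_neg, map_one, h0] at h2
    exact absurd h2 (by decide)

lemma core {n : ℕ} (hn : Even n) (hn1 : 1 < n) {k m : ℕ}
    (hk : Nat.Coprime k n) (hm : Nat.Coprime m n)
    (hk1 : (k : ZMod n) ≠ 1) (hk1' : (k : ZMod n) ≠ -1)
    (hmk1 : ((m * k : ℕ) : ZMod n) ≠ 1) (hmk1' : ((m * k : ℕ) : ZMod n) ≠ -1)
    (p q : Fin n × Fin n) (hpq : kingAdj n p q) :
    (((p.2.val * k + p.1.val * (m * k) : ℕ) : ZMod n)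
        - ((q.2.val * k + q.1.val * (m * k) : ℕ) : ZMod n) ≠ 1 ∧
     ((p.2.val * k + p.1.val * (m * k) : ℕ) : ZMod n)
        - ((q.2.val * k + q.1.val * (m * k) : ℕ) : ZMod n) ≠ -1) ∧
    ((m : ZMod n) ≠ 1 → (m : ZMod n) ≠ -1 →
      ((p.2.val * k + p.1.val * (m * k) : ℕ) : ZMod n)
        - ((q.2.val * k + q.1.val * (m * k) : ℕ) : ZMod n) ≠ 0) := by
  haveI : Fact (1 < n) := ⟨hn1⟩
  obtain ⟨hne, hi, hj⟩ := hpq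
  set E : ZMod n := ((p.2.val * k + p.1.val * (m * k) : ℕ) : ZMod n)
      - ((q.2.val * k + q.1.val * (m * k) : ℕ) : ZMod n) with hEdef
  set di : ℤ := (p.1.val : ℤ) - q.1.val with hdi
  set dj : ℤ := (p.2.val : ℤ) - q.2.val with hdj
  have hku : IsUnit ((k : ℕ) : ZMod n) := (ZMod.isUnit_iff_coprime k n).mpr hk
  have hmu : IsUnit ((m : ℕ) : ZMod n) := (ZMod.isUnit_iff_coprime m n).mpr hm
  have h2n : (2 : ℕ) ∣ n := hn.two_dvd
  have hkodd : Odd k := by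
    rcases Nat.even_or_odd k with h | h
    · exfalso
      have : (2 : ℕ) ∣ Nat.gcd k n := Nat.dvd_gcd h.two_dvd h2n
      rw [hk.gcd_eq_one] at this; omega
    · exact h
  have hmodd : Odd m := by
    rcases Nat.even_or_odd m with h | h
    · exfalso
      have : (2 : ℕ) ∣ Nat.gcd m n := Nat.dvd_gcd h.two_dvd h2n
      rw [hm.gcd_eq_one] at this; omega
    · exact h
  have hmkodd : Odd (m * k) := hmodd.mul hkodd
  have hK0 : ((k : ℕ) : ZMod n) ≠ 0 := hku.ne_zero
  have hMKmul : ((m * k : ℕ) : ZMod n) = ((m : ℕ) : ZMod n) * ((k : ℕ) : ZMod n) := by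
    push_cast; ring
  have hMK0 : ((m * k : ℕ) : ZMod n) ≠ 0 := by
    rw [hMKmul]; exact (hmu.mul hku).ne_zero
  have hsum0 : ∀ hm1' : (m : ZMod n) ≠ -1,
      ((k : ℕ) : ZMod n) + ((m * k : ℕ) : ZMod n) ≠ 0 := by
    intro hm1' h
    rw [hMKmul] at h
    have h2 : ((k : ℕ) : ZMod n) * (1 + (m : ZMod n)) = 0 := by ring_nf; linear_combination h
    have h3 := (hku.mul_right_eq_zero).mp h2
    exact hm1' (eq_neg_of_add_eq_zero_right h3)
  have hdif0 : ∀ hm1 : (m : ZMod n) ≠ 1,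
      ((k : ℕ) : ZMod n) - ((m * k : ℕ) : ZMod n) ≠ 0 := by
    intro hm1 h
    rw [hMKmul] at h
    have h2 : ((k : ℕ) : ZMod n) * (1 - (m : ZMod n)) = 0 := by linear_combination h
    have h3 := (hku.mul_right_eq_zero).mp h2
    apply hm1
    linear_combination -h3
  have hE : E = ((dj * k + di * (m * k) : ℤ) : ZMod n) := by
    rw [hEdef, hdi, hdj]; push_cast; ring
  have hnot : ¬ (di = 0 ∧ dj = 0) := by
    rintro ⟨h1, h2⟩
    apply hne
    apply Prod.ext
    · exact Fin.ext (by omega)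
    · exact Fin.ext (by omega)
  have hdi3 : di = -1 ∨ di = 0 ∨ di = 1 := by omega
  have hdj3 : dj = -1 ∨ dj = 0 ∨ dj = 1 := by omega
  -- useful parity facts
  obtain ⟨a, ha⟩ := hkodd
  obtain ⟨b, hb⟩ := hmkodd
  have hsumEv : Even ((k : ℤ) + ((m * k : ℕ) : ℤ)) := ⟨a + b + 1, by rw [hb, ha]; push_cast; ring⟩
  have hdifEv : Even ((k : ℤ) - ((m * k : ℕ) : ℤ)) := ⟨a - b, by rw [hb, ha]; push_cast; ring⟩
  rcases hdj3 with h1 | h1 | h1 <;> rcases hdi3 with h2 | h2 | h2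
  · -- dj = -1, di = -1 : E = -(k + mk)
    have hx : E = ((-((k : ℤ) + ((m * k : ℕ) : ℤ)) : ℤ) : ZMod n) := by
      rw [hE, h1, h2]; push_cast; ring
    obtain ⟨e1, e2⟩ := evenCast_ne h2n hsumEv.neg
    refine ⟨⟨by rw [hx]; exact e1, by rw [hx]; exact e2⟩, ?_⟩
    intro hm1 hm1' h0
    rw [hx] at h0
    apply hsum0 hm1'
    push_cast at h0 ⊢
    linear_combination -h0
  · -- dj = -1, di = 0 : E = -k
    have hx : E = -((k : ℕ) : ZMod n) := by rw [hE, h1, h2]; push_cast; ring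
    refine ⟨⟨?_, ?_⟩, ?_⟩
    · rw [hx]; intro h; exact hk1' (neg_eq_iff_eq_neg.mp h)
    · rw [hx]; intro h; exact hk1 (neg_inj.mp h)
    · intro _ _ h; rw [hx, neg_eq_zero] at h; exact hK0 h
  · -- dj = -1, di = 1 : E = mk - k
    have hx : E = ((-((k : ℤ) - ((m * k : ℕ) : ℤ)) : ℤ) : ZMod n) := by
      rw [hE, h1, h2]; push_cast; ring
    obtain ⟨e1, e2⟩ := evenCast_ne h2n hdifEv.neg
    refine ⟨⟨by rw [hx]; exact e1, by rw [hx]; exact e2⟩, ?_⟩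
    intro hm1 hm1' h0
    apply hdif0 hm1
    rw [hx] at h0
    push_cast at h0 ⊢
    linear_combination -h0
  · -- dj = 0, di = -1 : E = -mk
    have hx : E = -((m * k : ℕ) : ZMod n) := by rw [hE, h1, h2]; push_cast; ring
    refine ⟨⟨?_, ?_⟩, ?_⟩
    · rw [hx]; intro h; exact hmk1' (neg_eq_iff_eq_neg.mp h)
    · rw [hx]; intro h; exact hmk1 (neg_inj.mp h)
    · intro _ _ h; rw [hx, neg_eq_zero] at h; exact hMK0 h
  · exact absurd ⟨h2, h1⟩ hnot
  · -- dj = 0, di = 1 : E = mk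
    have hx : E = ((m * k : ℕ) : ZMod n) := by rw [hE, h1, h2]; push_cast; ring
    exact ⟨⟨by rw [hx]; exact hmk1, by rw [hx]; exact hmk1'⟩,
      fun _ _ h => hMK0 (by rw [hx] at h; exact h)⟩
  · -- dj = 1, di = -1 : E = k - mk
    have hx : E = ((((k : ℤ) - ((m * k : ℕ) : ℤ)) : ℤ) : ZMod n) := by
      rw [hE, h1, h2]; push_cast; ring
    obtain ⟨e1, e2⟩ := evenCast_ne h2n hdifEv
    refine ⟨⟨by rw [hx]; exact e1, by rw [hx]; exact e2⟩, ?_⟩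
    intro hm1 hm1' h0
    apply hdif0 hm1
    rw [hx] at h0
    push_cast at h0 ⊢
    linear_combination h0
  · -- dj = 1, di = 0 : E = k
    have hx : E = ((k : ℕ) : ZMod n) := by rw [hE, h1, h2]; push_cast; ring
    exact ⟨⟨by rw [hx]; exact hk1, by rw [hx]; exact hk1'⟩,
      fun _ _ h => hK0 (by rw [hx] at h; exact h)⟩
  · -- dj = 1, di = 1 : E = k + mk
    have hx : E = ((((k : ℤ) + ((m * k : ℕ) : ℤ)) : ℤ) : ZMod n) := by
      rw [hE, h1, h2]; push_cast; ring
    obtain ⟨e1, e2⟩ := evenCast_ne h2n hsumEv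
    refine ⟨⟨by rw [hx]; exact e1, by rw [hx]; exact e2⟩, ?_⟩
    intro hm1 hm1' h0
    apply hsum0 hm1'
    rw [hx] at h0
    push_cast at h0 ⊢
    linear_combination h0

lemma main {n : ℕ} (hn : Even n) {k m : ℕ}
    (hk : Nat.Coprime k n) (hm : Nat.Coprime m n)
    (hk1 : (k : ZMod n) ≠ 1) (hk1' : (k : ZMod n) ≠ -1)
    (hmk1 : ((m * k : ℕ) : ZMod n) ≠ 1) (hmk1' : ((m * k : ℕ) : ZMod n) ≠ -1) :
    latin n (fun i j => 1 + (j.val * k + i.val * (m * k)) % n) ∧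
    ∀ p q : Fin n × Fin n, kingAdj n p q →
      (((m : ZMod n) ≠ 1 → (m : ZMod n) ≠ -1 →
        (1 + (p.2.val * k + p.1.val * (m * k)) % n) ≠
          (1 + (q.2.val * k + q.1.val * (m * k)) % n)) ∧
      ¬ diffOne (1 + (p.2.val * k + p.1.val * (m * k)) % n)
          (1 + (q.2.val * k + q.1.val * (m * k)) % n)) := by
  have hn0 : n ≠ 0 := by
    rintro rfl
    rw [Nat.coprime_zero_right] at hk
    subst hk
    exact hk1 (by norm_num)
  have hn1 : 1 < n := by
    rcases hn with ⟨t, ht⟩; omega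
  haveI : NeZero n := ⟨hn0⟩
  have hku : IsUnit ((k : ℕ) : ZMod n) := (ZMod.isUnit_iff_coprime k n).mpr hk
  have hmku : IsUnit ((m * k : ℕ) : ZMod n) := (ZMod.isUnit_iff_coprime (m * k) n).mpr (hm.mul hk)
  constructor
  · refine ⟨fun i j => ?_, fun i => ?_, fun j => ?_⟩
    · simp only [Finset.mem_Icc]
      have := Nat.mod_lt (j.val * k + i.val * (m * k)) (by omega : 0 < n)
      omega
    · intro j1 j2 h
      simp only at h
      have hmod : (j1.val * k + i.val * (m * k)) % n = (j2.val * k + i.val * (m * k)) % n := by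
        omega
      have hc : ((j1.val * k + i.val * (m * k) : ℕ) : ZMod n)
          = ((j2.val * k + i.val * (m * k) : ℕ) : ZMod n) := by
        rw [ZMod.natCast_eq_natCast_iff']
        exact hmod
      push_cast at hc
      have hc2 : ((k : ℕ) : ZMod n) * (j1.val : ZMod n)
          = ((k : ℕ) : ZMod n) * (j2.val : ZMod n) := by linear_combination hc
      have hc3 := hku.mul_left_cancel hc2
      have hc4 := congrArg ZMod.val hc3
      rw [ZMod.val_cast_of_lt j1.isLt, ZMod.val_cast_of_lt j2.isLt] at hc4
      exact Fin.ext hc4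
    · intro i1 i2 h
      simp only at h
      have hmod : (j.val * k + i1.val * (m * k)) % n = (j.val * k + i2.val * (m * k)) % n := by
        omega
      have hc : ((j.val * k + i1.val * (m * k) : ℕ) : ZMod n)
          = ((j.val * k + i2.val * (m * k) : ℕ) : ZMod n) := by
        rw [ZMod.natCast_eq_natCast_iff']
        exact hmod
      push_cast at hc
      have hc2 : ((m * k : ℕ) : ZMod n) * (i1.val : ZMod n)
          = ((m * k : ℕ) : ZMod n) * (i2.val : ZMod n) := by push_cast; linear_combination hc
      have hc3 := hmku.mul_left_cancel hc2
      have hc4 := congrArg ZMod.val hc3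
      rw [ZMod.val_cast_of_lt i1.isLt, ZMod.val_cast_of_lt i2.isLt] at hc4
      exact Fin.ext hc4
  · intro p q hpq
    obtain ⟨⟨hE1, hE1'⟩, hE0⟩ := core hn hn1 hk hm hk1 hk1' hmk1 hmk1' p q hpq
    set A : ℕ := p.2.val * k + p.1.val * (m * k) with hA
    set B : ℕ := q.2.val * k + q.1.val * (m * k) with hB
    constructor
    · intro hm1 hm1' h
      apply hE0 hm1 hm1'
      have hab : A % n = B % n := by omega
      rw [sub_eq_zero, ← ZMod.natCast_mod A n, ← ZMod.natCast_mod B n, hab]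
    · intro hd
      simp only [diffOne] at hd
      have hcases : A % n = B % n + 1 ∨ B % n = A % n + 1 := by omega
      rcases hcases with hc | hc
      · apply hE1
        rw [← ZMod.natCast_mod A n, ← ZMod.natCast_mod B n, hc]
        push_cast
        ring
      · apply hE1'
        rw [← ZMod.natCast_mod A n, ← ZMod.natCast_mod B n, hc]
        push_cast
        ring

lemma totO1 (q : ℕ) (hq : Odd q) (h5 : 5 ≤ q) : 2 < Nat.totient q := by
  have hq0 : q ≠ 0 := by omega
  obtain ⟨p, hp, hpd⟩ := Nat.exists_prime_and_dvd (by omega : q ≠ 1)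
  have hqodd : q % 2 = 1 := Nat.odd_iff.mp hq
  have hp2 : p ≠ 2 := by rintro rfl; omega
  have hp3 : 3 ≤ p := by have := hp.two_le; omega
  have he1 : 1 ≤ q.factorization p := hp.factorization_pos_of_dvd hq0 hpd
  have hqe : p ^ q.factorization p * (q / p ^ q.factorization p) = q :=
    Nat.ordProj_mul_ordCompl_eq_self q p
  have hco : Nat.Coprime (p ^ q.factorization p) (q / p ^ q.factorization p) :=
    Nat.Coprime.pow_left _ (Nat.coprime_ordCompl hp hq0)
  have htot : Nat.totient q
      = p ^ (q.factorization p - 1) * (p - 1) * Nat.totient (q / p ^ q.factorization p) := by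
    conv_lhs => rw [← hqe]
    rw [Nat.totient_mul hco, Nat.totient_prime_pow hp he1]
  set e := q.factorization p with hedef
  set r := q / p ^ e with hr
  have hrdvd : r ∣ q := Nat.ordCompl_dvd q p
  have hr0 : 0 < r := Nat.ordCompl_pos p hq0
  have hrt : 1 ≤ Nat.totient r := Nat.totient_pos.mpr hr0
  have hrodd : r % 2 = 1 := by
    rcases Nat.even_or_odd r with h | h
    · exfalso
      have : (2:ℕ) ∣ q := dvd_trans h.two_dvd hrdvd
      omega
    · exact Nat.odd_iff.mp h
  rcases le_or_gt 5 p with h | h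
  · have h1 : 1 ≤ p ^ (e - 1) := Nat.one_le_pow _ _ (by omega)
    rw [htot]
    calc (2:ℕ) < 1 * 4 * 1 := by norm_num
    _ ≤ p ^ (e-1) * (p - 1) * Nat.totient r :=
        Nat.mul_le_mul (Nat.mul_le_mul h1 (by omega)) hrt
  · have hp3' : p = 3 := by
      rcases (by omega : p = 3 ∨ p = 4) with h' | h'
      · exact h'
      · exfalso; rw [h'] at hp; norm_num at hp
    subst hp3'
    rcases le_or_gt 2 e with he2 | he2
    · have h3 : 3 ≤ 3 ^ (e-1) := by
        calc (3:ℕ) = 3 ^ 1 := by norm_num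
        _ ≤ 3 ^ (e-1) := Nat.pow_le_pow_right (by norm_num) (by omega)
      rw [htot]
      calc (2:ℕ) < 3 * 2 * 1 := by norm_num
      _ ≤ 3 ^ (e-1) * (3-1) * Nat.totient r :=
          Nat.mul_le_mul (Nat.mul_le_mul h3 (by norm_num)) hrt
    · have he1' : e = 1 := by omega
      have hq3 : 3 * r = q := by rw [← hqe, he1', pow_one]
      have hrev : Even (Nat.totient r) := Nat.totient_even (by omega)
      obtain ⟨c, hc⟩ := hrev
      rw [htot, he1']
      norm_num
      omega

lemma totO2 (q : ℕ) (hq : Odd q) (h7 : 7 ≤ q) : 4 < Nat.totient q := by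
  have hq0 : q ≠ 0 := by omega
  obtain ⟨p, hp, hpd⟩ := Nat.exists_prime_and_dvd (by omega : q ≠ 1)
  have hqodd : q % 2 = 1 := Nat.odd_iff.mp hq
  have hp2 : p ≠ 2 := by rintro rfl; omega
  have hp3 : 3 ≤ p := by have := hp.two_le; omega
  have he1 : 1 ≤ q.factorization p := hp.factorization_pos_of_dvd hq0 hpd
  have hqe : p ^ q.factorization p * (q / p ^ q.factorization p) = q :=
    Nat.ordProj_mul_ordCompl_eq_self q p
  have hco : Nat.Coprime (p ^ q.factorization p) (q / p ^ q.factorization p) :=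
    Nat.Coprime.pow_left _ (Nat.coprime_ordCompl hp hq0)
  have hcop : Nat.Coprime p (q / p ^ q.factorization p) := Nat.coprime_ordCompl hp hq0
  have htot : Nat.totient q
      = p ^ (q.factorization p - 1) * (p - 1) * Nat.totient (q / p ^ q.factorization p) := by
    conv_lhs => rw [← hqe]
    rw [Nat.totient_mul hco, Nat.totient_prime_pow hp he1]
  set e := q.factorization p with hedef
  set r := q / p ^ e with hr
  have hrdvd : r ∣ q := Nat.ordCompl_dvd q p
  have hr0 : 0 < r := Nat.ordCompl_pos p hq0
  have hrt : 1 ≤ Nat.totient r := Nat.totient_pos.mpr hr0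
  have hrodd : r % 2 = 1 := by
    rcases Nat.even_or_odd r with h | h
    · exfalso
      have : (2:ℕ) ∣ q := dvd_trans h.two_dvd hrdvd
      omega
    · exact Nat.odd_iff.mp h
  rcases le_or_gt 7 p with h | h
  · have h1 : 1 ≤ p ^ (e - 1) := Nat.one_le_pow _ _ (by omega)
    rw [htot]
    calc (4:ℕ) < 1 * 6 * 1 := by norm_num
    _ ≤ p ^ (e-1) * (p - 1) * Nat.totient r :=
        Nat.mul_le_mul (Nat.mul_le_mul h1 (by omega)) hrt
  · have hp35 : p = 3 ∨ p = 5 := by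
      rcases (by omega : p = 3 ∨ p = 4 ∨ p = 5 ∨ p = 6) with h' | h' | h' | h'
      · exact Or.inl h'
      · exfalso; rw [h'] at hp; norm_num at hp
      · exact Or.inr h'
      · exfalso; rw [h'] at hp; norm_num at hp
    rcases hp35 with rfl | rfl
    · rcases le_or_gt 2 e with he2 | he2
      · have h3 : 3 ≤ 3 ^ (e-1) := by
          calc (3:ℕ) = 3 ^ 1 := by norm_num
          _ ≤ 3 ^ (e-1) := Nat.pow_le_pow_right (by norm_num) (by omega)
        rw [htot]
        calc (4:ℕ) < 3 * 2 * 1 := by norm_num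
        _ ≤ 3 ^ (e-1) * (3-1) * Nat.totient r :=
            Nat.mul_le_mul (Nat.mul_le_mul h3 (by norm_num)) hrt
      · have he1' : e = 1 := by omega
        have hq3 : 3 * r = q := by rw [← hqe, he1', pow_one]
        have h3r : ¬ (3 ∣ r) := by
          intro hdvd
          have h3d : (3:ℕ) ∣ Nat.gcd 3 r := Nat.dvd_gcd dvd_rfl hdvd
          rw [Nat.Coprime.gcd_eq_one hcop] at h3d
          omega
        have hr5 : 5 ≤ r := by omega
        have := totO1 r (Nat.odd_iff.mpr hrodd) hr5
        rw [htot, he1']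
        norm_num
        omega
    · rcases le_or_gt 2 e with he2 | he2
      · have h5 : 5 ≤ 5 ^ (e-1) := by
          calc (5:ℕ) = 5 ^ 1 := by norm_num
          _ ≤ 5 ^ (e-1) := Nat.pow_le_pow_right (by norm_num) (by omega)
        rw [htot]
        calc (4:ℕ) < 5 * 4 * 1 := by norm_num
        _ ≤ 5 ^ (e-1) * (5-1) * Nat.totient r :=
            Nat.mul_le_mul (Nat.mul_le_mul h5 (by norm_num)) hrt
      · have he1' : e = 1 := by omega
        have hq5 : 5 * r = q := by rw [← hqe, he1', pow_one]
        have hr3 : 3 ≤ r := by omega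
        have hrev : Even (Nat.totient r) := Nat.totient_even (by omega)
        obtain ⟨c, hc⟩ := hrev
        rw [htot, he1']
        norm_num
        omega

lemma totE (n : ℕ) (hn : Even n) (h12 : 12 < n) : 4 < Nat.totient n := by
  have hn0 : n ≠ 0 := by omega
  have h2 : (2:ℕ) ∣ n := hn.two_dvd
  have hp : Nat.Prime 2 := Nat.prime_two
  have he1 : 1 ≤ n.factorization 2 := hp.factorization_pos_of_dvd hn0 h2
  have hqe : 2 ^ n.factorization 2 * (n / 2 ^ n.factorization 2) = n :=
    Nat.ordProj_mul_ordCompl_eq_self n 2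
  have hco : Nat.Coprime (2 ^ n.factorization 2) (n / 2 ^ n.factorization 2) :=
    Nat.Coprime.pow_left _ (Nat.coprime_ordCompl hp hn0)
  have htot : Nat.totient n
      = 2 ^ (n.factorization 2 - 1) * (2 - 1) * Nat.totient (n / 2 ^ n.factorization 2) := by
    conv_lhs => rw [← hqe]
    rw [Nat.totient_mul hco, Nat.totient_prime_pow hp he1]
  set a := n.factorization 2 with ha
  set q := n / 2 ^ a with hqdef
  have hq0 : 0 < q := Nat.ordCompl_pos 2 hn0
  have hnd : ¬ (2 ∣ q) := Nat.not_dvd_ordCompl hp hn0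
  have hqodd : q % 2 = 1 := by omega
  have htot' : Nat.totient n = 2 ^ (a - 1) * Nat.totient q := by
    rw [htot]; norm_num
  rcases (by omega : q = 1 ∨ 3 ≤ q) with hq1 | hq3
  · have hna : 2 ^ a = n := by rw [← hqe, hq1, mul_one]
    have ha4 : 4 ≤ a := by
      by_contra hlt
      have : (2:ℕ) ^ a ≤ 2 ^ 3 := Nat.pow_le_pow_right (by norm_num) (by omega)
      omega
    have h8 : (8:ℕ) ≤ 2 ^ (a-1) := by
      calc (8:ℕ) = 2 ^ 3 := by norm_num
      _ ≤ 2 ^ (a-1) := Nat.pow_le_pow_right (by norm_num) (by omega)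
    rw [htot', hq1, Nat.totient_one, mul_one]
    omega
  · have hqt2 : 2 ≤ Nat.totient q := by
      obtain ⟨c, hc⟩ := Nat.totient_even (by omega : 2 < q)
      have := Nat.totient_pos.mpr (by omega : 0 < q)
      omega
    rcases le_or_gt 3 a with ha3 | ha3
    · have h4 : 4 ≤ 2 ^ (a-1) := by
        calc (4:ℕ) = 2 ^ 2 := by norm_num
        _ ≤ 2 ^ (a-1) := Nat.pow_le_pow_right (by norm_num) (by omega)
      rw [htot']
      calc (4:ℕ) < 4 * 2 := by norm_num
      _ ≤ 2 ^ (a-1) * Nat.totient q := Nat.mul_le_mul h4 hqt2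
    · rcases (by omega : a = 1 ∨ a = 2) with ha1 | ha1
      · have hq7 : 7 ≤ q := by
          rw [ha1, pow_one] at hqe; omega
        have := totO2 q (Nat.odd_iff.mpr hqodd) hq7
        rw [htot', ha1]
        simpa using this
      · have hq5 : 5 ≤ q := by
          rw [ha1] at hqe; norm_num at hqe; omega
        have := totO1 q (Nat.odd_iff.mpr hqodd) hq5
        rw [htot', ha1]
        norm_num
        omega

lemma exists_km (n : ℕ) (hn : Even n) (h12 : 12 < n) :
    ∃ k m : ℕ, Nat.Coprime k n ∧ Nat.Coprime m n ∧
      (k : ZMod n) ≠ 1 ∧ (k : ZMod n) ≠ -1 ∧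
      (m : ZMod n) ≠ 1 ∧ (m : ZMod n) ≠ -1 ∧
      ((m * k : ℕ) : ZMod n) ≠ 1 ∧ ((m * k : ℕ) : ZMod n) ≠ -1 := by
  haveI : NeZero n := ⟨by omega⟩
  have hcard : 4 < Fintype.card (ZMod n)ˣ := by
    rw [ZMod.card_units_eq_totient]; exact totE n hn h12
  have hu : ∃ u : (ZMod n)ˣ, u ∉ ({1, -1} : Finset (ZMod n)ˣ) := by
    by_contra h
    push_neg at h
    have hsub : (Finset.univ : Finset (ZMod n)ˣ) ⊆ {1, -1} := fun x _ => h x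
    have hc := Finset.card_le_card hsub
    rw [Finset.card_univ] at hc
    have h2 : ({1, -1} : Finset (ZMod n)ˣ).card ≤ 2 := by
      apply le_trans (Finset.card_insert_le _ _)
      simp
    omega
  obtain ⟨u, hu⟩ := hu
  have hv : ∃ v : (ZMod n)ˣ, v ∉ ({1, -1, u, -u} : Finset (ZMod n)ˣ) := by
    by_contra h
    push_neg at h
    have hsub : (Finset.univ : Finset (ZMod n)ˣ) ⊆ {1, -1, u, -u} := fun x _ => h x
    have hc := Finset.card_le_card hsub
    rw [Finset.card_univ] at hc
    have h4 : ({1, -1, u, -u} : Finset (ZMod n)ˣ).card ≤ 4 := by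
      have c1 := Finset.card_insert_le (1 : (ZMod n)ˣ) ({-1, u, -u} : Finset (ZMod n)ˣ)
      have c2 := Finset.card_insert_le (-1 : (ZMod n)ˣ) ({u, -u} : Finset (ZMod n)ˣ)
      have c3 := Finset.card_insert_le (u : (ZMod n)ˣ) ({-u} : Finset (ZMod n)ˣ)
      have c4 : ({-u} : Finset (ZMod n)ˣ).card = 1 := Finset.card_singleton _
      omega
    omega
  obtain ⟨v, hv⟩ := hv
  simp only [Finset.mem_insert, Finset.mem_singleton, not_or] at hu hv
  obtain ⟨hu1, hu2⟩ := hu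
  obtain ⟨hv1, hv2, hv3, hv4⟩ := hv
  have cu : (((u : ZMod n)).val : ZMod n) = (u : ZMod n) := ZMod.natCast_rightInverse _
  have cm : ((((v * u⁻¹ : (ZMod n)ˣ) : ZMod n)).val : ZMod n) = ((v * u⁻¹ : (ZMod n)ˣ) : ZMod n) :=
    ZMod.natCast_rightInverse _
  have hneg1 : ((-1 : (ZMod n)ˣ) : ZMod n) = -1 := by simp
  have key : (((((v * u⁻¹ : (ZMod n)ˣ) : ZMod n)).val * ((u : ZMod n)).val : ℕ) : ZMod n)
      = (v : ZMod n) := by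
    rw [Nat.cast_mul, cm, cu, ← Units.val_mul, inv_mul_cancel_right]
  refine ⟨((u : ZMod n)).val, (((v * u⁻¹ : (ZMod n)ˣ) : ZMod n)).val,
    ZMod.val_coe_unit_coprime u, ZMod.val_coe_unit_coprime _, ?_, ?_, ?_, ?_, ?_, ?_⟩
  · rw [cu]; intro h; exact hu1 (Units.ext (by rw [h, Units.val_one]))
  · rw [cu]; intro h; exact hu2 (Units.ext (by rw [h, hneg1]))
  · rw [cm]; intro h
    have := Units.val_eq_one.mp h
    rw [mul_inv_eq_one] at this
    exact hv3 this
  · rw [cm]; intro h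
    apply hv4
    have h2 : (v * u⁻¹ : (ZMod n)ˣ) = -1 := Units.ext (by rw [h, hneg1])
    have h3 : v = -1 * u := by
      rw [← h2, inv_mul_cancel_right]
    rw [h3, neg_one_mul]
  · intro h
    rw [key] at h
    exact hv1 (Units.ext (by rw [Units.val_one]; exact h))
  · intro h
    rw [key] at h
    exact hv2 (Units.ext (h.trans hneg1.symm))

lemma exists_k (n : ℕ) (hn : Even n) (h6 : 6 < n) :
    ∃ k : ℕ, Nat.Coprime k n ∧ (k : ZMod n) ≠ 1 ∧ (k : ZMod n) ≠ -1 := by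
  haveI : NeZero n := ⟨by omega⟩
  have castNe : ∀ x : ℕ, 2 ≤ x → x + 1 < n → (x : ZMod n) ≠ 1 ∧ (x : ZMod n) ≠ -1 := by
    intro x h2 hx
    constructor
    · intro h
      have h1 : (x : ZMod n) = ((1 : ℕ) : ZMod n) := by exact_mod_cast h
      rw [ZMod.natCast_eq_natCast_iff'] at h1
      rw [Nat.mod_eq_of_lt (by omega), Nat.mod_eq_of_lt (by omega)] at h1
      omega
    · intro h
      have h0 : ((x + 1 : ℕ) : ZMod n) = 0 := by push_cast [h]; ring
      rw [ZMod.natCast_eq_zero_iff] at h0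
      have := Nat.le_of_dvd (by omega) h0
      omega
  obtain ⟨s, hs⟩ : ∃ s, n = 2 * s := by
    rcases hn with ⟨t, ht⟩; exact ⟨t, by omega⟩
  rcases Nat.even_or_odd s with he | ho
  · have hse := Nat.even_iff.mp he
    obtain ⟨hA, hB⟩ := castNe (s + 1) (by omega) (by omega)
    refine ⟨s + 1, ?_, hA, hB⟩
    rw [hs]
    refine Nat.Coprime.mul_right ?_ ?_
    · rw [Nat.coprime_two_right]
      exact he.add_one
    · have h1 : Nat.Coprime (1 + s) s :=
        (Nat.coprime_add_self_left).mpr (Nat.coprime_one_left s)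
      simpa [Nat.add_comm] using h1
  · have hso := Nat.odd_iff.mp ho
    obtain ⟨hA, hB⟩ := castNe (s + 2) (by omega) (by omega)
    refine ⟨s + 2, ?_, hA, hB⟩
    rw [hs]
    refine Nat.Coprime.mul_right ?_ ?_
    · rw [Nat.coprime_two_right]
      obtain ⟨c, hc⟩ := ho
      exact ⟨c + 1, by omega⟩
    · have h1 : Nat.Coprime (2 + s) s :=
        (Nat.coprime_add_self_left).mpr (Nat.coprime_two_left.mpr ho)
      simpa [Nat.add_comm] using h1

theorem stmt9 (n : ℕ) (hn : Even n) :
    (6 < n → ∃ M : Fin n → Fin n → ℕ, latin n M ∧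
      ∀ p q : Fin n × Fin n, kingAdj n p q → ¬ diffOne (M p.1 p.2) (M q.1 q.2)) ∧
    (12 < n → ∃ M : Fin n → Fin n → ℕ, latin n M ∧
      ∀ p q : Fin n × Fin n, kingAdj n p q →
        M p.1 p.2 ≠ M q.1 q.2 ∧ ¬ diffOne (M p.1 p.2) (M q.1 q.2)) ∧
    (∀ k m : ℕ, Nat.Coprime k n → Nat.Coprime m n →
      (k : ZMod n) ≠ 1 → (k : ZMod n) ≠ -1 →
      (m : ZMod n) ≠ 1 → (m : ZMod n) ≠ -1 →
      ((m * k : ℕ) : ZMod n) ≠ 1 → ((m * k : ℕ) : ZMod n) ≠ -1 →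
      latin n (fun i j => 1 + (j.val * k + i.val * (m * k)) % n) ∧
      ∀ p q : Fin n × Fin n, kingAdj n p q →
        (1 + (p.2.val * k + p.1.val * (m * k)) % n) ≠
          (1 + (q.2.val * k + q.1.val * (m * k)) % n) ∧
        ¬ diffOne (1 + (p.2.val * k + p.1.val * (m * k)) % n)
            (1 + (q.2.val * k + q.1.val * (m * k)) % n)) := by
  refine ⟨?_, ?_, ?_⟩
  · intro h6
    obtain ⟨k, hk, hk1, hk1'⟩ := exists_k n hn h6
    obtain ⟨hl, hadj⟩ := main (m := 1) hn hk (Nat.coprime_one_left n) hk1 hk1'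
      (by simpa using hk1) (by simpa using hk1')
    exact ⟨_, hl, fun p q hpq => (hadj p q hpq).2⟩
  · intro h12
    obtain ⟨k, m, hk, hm, hk1, hk1', hm1, hm1', hmk1, hmk1'⟩ := exists_km n hn h12
    obtain ⟨hl, hadj⟩ := main hn hk hm hk1 hk1' hmk1 hmk1'
    exact ⟨_, hl, fun p q hpq => ⟨(hadj p q hpq).1 hm1 hm1', (hadj p q hpq).2⟩⟩
  · intro k m hk hm hk1 hk1' hm1 hm1' hmk1 hmk1'
    obtain ⟨hl, hadj⟩ := main hn hk hm hk1 hk1' hmk1 hmk1'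
    exact ⟨hl, fun p q hpq => ⟨(hadj p q hpq).1 hm1 hm1', (hadj p q hpq).2⟩⟩
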